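/- Let f : ℝⁿ → ℝⁿ and μ ≥ 0. Suppose that: (i) f is continuous on ℝⁿ; (ii) for every x ∈ ℝⁿ there exist η_x ≥ 0 and a strict η_x-estimator g_x of f at x with inj(g_x, x) > η_x; (iii) for every x ∈ ℝⁿ f admits a strict μ-estimator h_x at x, and σ := inf over x ∈ ℝⁿ of lop(h_x, x) satisfies σ > μ. Then f is a bijection of ℝⁿ onto ℝⁿ, and f⁻¹ is Lipschitz continuous on ℝⁿ with constant (σ − μ)⁻¹. -/

import Mathlib

open Metric Set
open scoped ENNReal NNReal

noncomputable section

variable {E F : Type*} [NormedAddCommGroup E] [NormedAddCommGroup F]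

/-- `f` is `α`-covering at `x`: for every `ε > 0` there is `r ∈ (0, ε]` with
`B̄(f x, α r) ⊆ f (B̄(x, r))`. -/
def AlphaCoveringAt (f : E → F) (x : E) (α : ℝ) : Prop :=
  ∀ ε > (0:ℝ), ∃ r : ℝ, 0 < r ∧ r ≤ ε ∧
    closedBall (f x) (α * r) ⊆ f '' closedBall x r

/-- The covering bound `cov(f, x)`: supremum of all `α > 0` for which `f` is
`α`-covering at `x`. -/
def covBound (f : E → F) (x : E) : ℝ≥0∞ :=
  ⨆ (α : ℝ≥0) (_ : 0 < α ∧ AlphaCoveringAt f x (α : ℝ)), (α : ℝ≥0∞)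

/-- `f` is linearly open around `xb` with constant `α`. -/
def LinOpenWith (f : E → F) (xb : E) (α : ℝ) : Prop :=
  ∃ U ∈ nhds xb, ∃ V ∈ nhds (f xb), ∀ x ∈ U, ∀ r > (0:ℝ),
    ball (f x) (α * r) ∩ V ⊆ f '' ball x r

/-- The exact linear openness bound `lop(f, xb)` (`0` if no constant works). -/
def lopBound (f : E → F) (xb : E) : ℝ≥0∞ :=
  ⨆ (α : ℝ≥0) (_ : 0 < α ∧ LinOpenWith f xb (α : ℝ)), (α : ℝ≥0∞)

/-- `ℓ` is a Lipschitz constant of `h` on some neighbourhood of `xb`. -/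
def IsLipConstAround (h : E → F) (xb : E) (ℓ : ℝ) : Prop :=
  ∃ U ∈ nhds xb, ∀ x₁ ∈ U, ∀ x₂ ∈ U, ‖h x₁ - h x₂‖ ≤ ℓ * ‖x₁ - x₂‖

/-- `lip(h, xb)`: infimum of all `ℓ > 0` which are Lipschitz constants of `h`
on some neighbourhood of `xb` (`∞` if `h` is not locally Lipschitz at `xb`). -/
def lipBound (h : E → F) (xb : E) : ℝ≥0∞ :=
  ⨅ (ℓ : ℝ≥0) (_ : 0 < ℓ ∧ IsLipConstAround h xb (ℓ : ℝ)), (ℓ : ℝ≥0∞)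

/-- `β` is a metric injectivity constant for `g` on some closed ball around `xb`. -/
def IsInjConstAround (g : E → F) (xb : E) (β : ℝ) : Prop :=
  ∃ δ > (0:ℝ), ∀ x₁ ∈ closedBall xb δ, ∀ x₂ ∈ closedBall xb δ,
    β * ‖x₁ - x₂‖ ≤ ‖g x₁ - g x₂‖

/-- `g` is metrically injective around `xb`. -/
def MetricallyInjectiveAround (g : E → F) (xb : E) : Prop :=
  ∃ β > (0:ℝ), IsInjConstAround g xb β

/-- The metric injection bound `inj(g, xb)`: supremum of all valid `β > 0`. -/
def injBound (g : E → F) (xb : E) : ℝ≥0∞ :=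
  ⨆ (β : ℝ≥0) (_ : 0 < β ∧ IsInjConstAround g xb (β : ℝ)), (β : ℝ≥0∞)

/-- `h` is a strict `μ`-estimator of `f` at `xb`: `h xb = f xb` and
`lip(f - h, xb) ≤ μ`. -/
def IsStrictEstimator (f h : E → F) (xb : E) (μ : ℝ≥0) : Prop :=
  h xb = f xb ∧ lipBound (fun x => f x - h x) xb ≤ (μ : ℝ≥0∞)

/-- `g` is strongly (metrically) regular around `xb`: it is linearly open around
`xb` and the set-valued inverse `g⁻¹` has a single-valued graphical localization
around `(g xb, xb)`. -/
def StronglyRegularAround (g : E → F) (xb : E) : Prop :=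
  (∃ α > (0:ℝ), LinOpenWith g xb α) ∧
  ∃ V ∈ nhds (g xb), ∃ U ∈ nhds xb, ∀ y ∈ V, ∃ x : E, g ⁻¹' {y} ∩ U = {x}

section Aux

variable {n : ℕ}

local notation "EE" => EuclideanSpace ℝ (Fin n)

/-- Uniform goodness of `f` at `z` at scale `ρ` with rate `c`. -/
def GoodAt (f : EE → EE) (c : ℝ) (z : EE) (ρ : ℝ) : Prop :=
  (∀ x₁ ∈ closedBall z (4*ρ), ∀ x₂ ∈ closedBall z (4*ρ),
      c * ‖x₁ - x₂‖ ≤ ‖f x₁ - f x₂‖) ∧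
  (∀ r : ℝ, 0 < r → r ≤ ρ → ball (f z) (c*r) ⊆ f '' ball z r)

theorem linOpenWith_mono {f : EE → EE} {x : EE} {c c' : ℝ} (hcc : c ≤ c')
    (h : LinOpenWith f x c') : LinOpenWith f x c := by
  obtain ⟨U, hU, V, hV, H⟩ := h
  refine ⟨U, hU, V, hV, fun x hx r hr => ?_⟩
  refine subset_trans (inter_subset_inter_left V ?_) (H x hx r hr)
  exact ball_subset_ball (mul_le_mul_of_nonneg_right hcc hr.le)

/-- Local injectivity from strict estimators with injectivity bound. -/
theorem local_inj {f : EE → EE}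
    (hinj : ∀ x : EE, ∃ η : ℝ≥0, ∃ g : EE → EE,
      IsStrictEstimator f g x η ∧ (η : ℝ≥0∞) < injBound g x) :
    ∀ xb : EE, ∃ δ > (0:ℝ), Set.InjOn f (closedBall xb δ) := by
  intro xb
  obtain ⟨η, g, ⟨-, hlip⟩, hβ⟩ := hinj xb
  rw [injBound, lt_iSup_iff] at hβ
  obtain ⟨β, hβ⟩ := hβ
  rw [lt_iSup_iff] at hβ
  obtain ⟨⟨hβ0, δ, hδ0, hg⟩, hηβ⟩ := hβ
  have hlt : lipBound (fun x => f x - g x) xb < (β : ℝ≥0∞) := lt_of_le_of_lt hlip hηβ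
  rw [lipBound, iInf_lt_iff] at hlt
  obtain ⟨ℓ, hlt⟩ := hlt
  rw [iInf_lt_iff] at hlt
  obtain ⟨⟨hℓ0, U, hU, hL⟩, hℓβ⟩ := hlt
  have hℓβ' : (ℓ:ℝ) < β := by exact_mod_cast hℓβ
  obtain ⟨ε, hε0, hball⟩ := Metric.mem_nhds_iff.mp hU
  refine ⟨min δ (ε/2), lt_min hδ0 (half_pos hε0), ?_⟩
  intro x₁ h₁ x₂ h₂ hf12
  have hmem : ∀ x ∈ closedBall xb (min δ (ε/2)), x ∈ closedBall xb δ ∧ x ∈ U := by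
    intro x hx
    rw [mem_closedBall] at hx
    constructor
    · exact mem_closedBall.mpr (le_trans hx (min_le_left _ _))
    · exact hball (mem_ball.mpr (lt_of_le_of_lt (le_trans hx (min_le_right _ _)) (half_lt_self hε0)))
  obtain ⟨h₁δ, h₁U⟩ := hmem _ h₁
  obtain ⟨h₂δ, h₂U⟩ := hmem _ h₂
  have key : (β:ℝ) * ‖x₁ - x₂‖ ≤ (ℓ:ℝ) * ‖x₁ - x₂‖ := by
    calc (β:ℝ) * ‖x₁ - x₂‖ ≤ ‖g x₁ - g x₂‖ := hg x₁ h₁δ x₂ h₂δ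
    _ = ‖(f x₁ - g x₁) - (f x₂ - g x₂)‖ := by
      rw [hf12, show f x₂ - g x₁ - (f x₂ - g x₂) = -(g x₁ - g x₂) from by abel, norm_neg]
    _ ≤ (ℓ:ℝ) * ‖x₁ - x₂‖ := hL x₁ h₁U x₂ h₂U
  by_contra hne
  have : ‖x₁ - x₂‖ > 0 := by
    simpa [norm_sub_pos_iff] using sub_ne_zero.mpr hne
  nlinarith

/-- Pointwise goodness package from local injectivity + linear openness. -/
theorem pointwise_good {f : EE → EE} {c : ℝ} (hc : 0 < c) (hf : Continuous f)
    (hopen : ∀ xb : EE, LinOpenWith f xb c)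
    (hlocinj : ∀ xb : EE, ∃ δ > (0:ℝ), Set.InjOn f (closedBall xb δ)) :
    ∀ xb : EE, ∃ ρ > (0:ℝ), Set.InjOn f (closedBall xb ρ) ∧
      ∀ x ∈ closedBall xb ρ, ∀ r : ℝ, 0 < r → r ≤ ρ →
        ball (f x) (c*r) ⊆ f '' ball x r := by
  intro xb
  obtain ⟨δ, hδ0, hinj⟩ := hlocinj xb
  obtain ⟨U, hU, V, hV, H⟩ := hopen xb
  obtain ⟨u, hu0, hupe⟩ := Metric.mem_nhds_iff.mp hU
  obtain ⟨v, hv0, hvpe⟩ := Metric.mem_nhds_iff.mp hV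
  have hcf : ContinuousAt f xb := hf.continuousAt
  rw [Metric.continuousAt_iff] at hcf
  obtain ⟨w, hw0, hw⟩ := hcf (v/2) (half_pos hv0)
  refine ⟨min (min δ (u/2)) (min (w/2) (v/(4*c))), ?_, ?_, ?_⟩
  · simp only [lt_min_iff]
    refine ⟨⟨hδ0, half_pos hu0⟩, half_pos hw0, div_pos hv0 (by linarith)⟩
  · exact hinj.mono (closedBall_subset_closedBall (le_trans (min_le_left _ _) (min_le_left _ _)))
  · intro x hx r hr0 hrρ
    set ρ := min (min δ (u/2)) (min (w/2) (v/(4*c))) with hρdef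
    have hxρ : dist x xb ≤ ρ := mem_closedBall.mp hx
    have hxU : x ∈ U := by
      apply hupe
      rw [mem_ball]
      calc dist x xb ≤ ρ := hxρ
      _ ≤ u/2 := le_trans (min_le_left _ _) (min_le_right _ _)
      _ < u := half_lt_self hu0
    have hfx : dist (f x) (f xb) < v/2 := by
      apply hw
      calc dist x xb ≤ ρ := hxρ
      _ ≤ w/2 := le_trans (min_le_right _ _) (min_le_left _ _)
      _ < w := half_lt_self hw0
    have hsubV : ball (f x) (c*r) ⊆ V := by
      intro z hz
      apply hvpe
      rw [mem_ball] at hz ⊢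
      have hcr : c * r ≤ v/4 := by
        have : r ≤ v/(4*c) := le_trans hrρ (le_trans (min_le_right _ _) (min_le_right _ _))
        calc c * r ≤ c * (v/(4*c)) := by nlinarith
        _ = v/4 := by field_simp
      calc dist z (f xb) ≤ dist z (f x) + dist (f x) (f xb) := dist_triangle _ _ _
      _ < c*r + v/2 := by linarith
      _ ≤ v/4 + v/2 := by linarith
      _ < v := by linarith
    have := H x hxU r hr0
    intro z hz
    exact this ⟨hz, hsubV hz⟩


/-- Uniform goodness on a compact set. -/
theorem uniform_good {f : EE → EE} {c : ℝ} (hc : 0 < c)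
    (hnt : ∃ v : EE, v ≠ 0)
    (hgood : ∀ xb : EE, ∃ ρ > (0:ℝ), Set.InjOn f (closedBall xb ρ) ∧
      ∀ x ∈ closedBall xb ρ, ∀ r : ℝ, 0 < r → r ≤ ρ →
        ball (f x) (c*r) ⊆ f '' ball x r)
    {K : Set EE} (hK : IsCompact K) :
    ∃ ρ₀ > (0:ℝ), ∀ z ∈ K, GoodAt f c z ρ₀ := by
  choose ρ hρ0 hInj hCov using hgood
  -- expansivity on quarter balls
  have hexp : ∀ xb : EE, ∀ x₁ ∈ closedBall xb (ρ xb / 4), ∀ x₂ ∈ closedBall xb (ρ xb / 4),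
      c * ‖x₁ - x₂‖ ≤ ‖f x₁ - f x₂‖ := by
    intro xb x₁ h₁ x₂ h₂
    by_contra hlt
    push_neg at hlt
    have hd0 : 0 < ‖x₁ - x₂‖ := by
      rcases le_or_gt ‖x₁ - x₂‖ 0 with h | h
      · nlinarith [norm_nonneg (f x₁ - f x₂), norm_nonneg (x₁ - x₂)]
      · exact h
    set r := ‖x₁ - x₂‖ with hrdef
    have hrρ : r ≤ ρ xb / 2 := by
      have := dist_triangle x₁ xb x₂
      rw [mem_closedBall] at h₁ h₂
      rw [hrdef, ← dist_eq_norm]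
      rw [dist_comm] at h₂
      linarith
    have h₁ρ : x₁ ∈ closedBall xb (ρ xb) := by
      rw [mem_closedBall] at h₁ ⊢; linarith [hρ0 xb]
    have hmem : f x₂ ∈ ball (f x₁) (c*r) := by
      rw [mem_ball, dist_comm, dist_eq_norm]; exact hlt
    obtain ⟨x', hx', hfx'⟩ := hCov xb x₁ h₁ρ r hd0 (le_trans hrρ (by linarith [hρ0 xb])) hmem
    have hx'ρ : x' ∈ closedBall xb (ρ xb) := by
      rw [mem_closedBall]
      rw [mem_ball] at hx'
      rw [mem_closedBall] at h₁
      calc dist x' xb ≤ dist x' x₁ + dist x₁ xb := dist_triangle _ _ _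
      _ ≤ r + ρ xb / 4 := by linarith
      _ ≤ ρ xb := by linarith
    have h₂ρ : x₂ ∈ closedBall xb (ρ xb) := by
      rw [mem_closedBall] at h₂ ⊢; linarith [hρ0 xb]
    have : x' = x₂ := hInj xb hx'ρ h₂ρ hfx'
    rw [mem_ball, this, dist_comm, dist_eq_norm] at hx'
    exact absurd hx' (lt_irrefl _)
  -- Lebesgue number
  obtain ⟨δ, hδ0, hleb⟩ := lebesgue_number_lemma_of_metric (s := K) (c := fun xb : EE => ball xb (ρ xb / 8))
    hK (fun xb => isOpen_ball) (fun z _ => mem_iUnion.mpr ⟨z, mem_ball_self (by linarith [hρ0 z])⟩)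
  refine ⟨δ/8, by linarith, ?_⟩
  intro z hz
  obtain ⟨xb, hsub⟩ := hleb z hz
  have hzxb : dist z xb < ρ xb / 8 := mem_ball.mp (hsub (mem_ball_self hδ0))
  -- δ is at most ρ xb / 4
  have hδρ : δ ≤ ρ xb / 4 := by
    obtain ⟨v, hv⟩ := hnt
    have hvn : 0 < ‖v‖ := norm_pos_iff.mpr hv
    by_contra hcon
    push_neg at hcon
    set δ' := ρ xb / 4 with hδ'def
    have hδ'δ : δ' < δ := hcon
    have hδ'0 : 0 ≤ δ' := by linarith [hρ0 xb]
    set p := z + (δ' / ‖v‖) • v with hpdef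
    have hpz : dist p z = δ' := by
      rw [hpdef, dist_eq_norm, add_sub_cancel_left, norm_smul, Real.norm_eq_abs,
        abs_div, abs_of_nonneg hδ'0, abs_of_pos hvn, div_mul_cancel₀ _ (ne_of_gt hvn)]
    have hpmem : p ∈ ball xb (ρ xb / 8) := hsub (by rw [mem_ball, hpz]; exact hδ'δ)
    rw [mem_ball] at hpmem
    have := dist_triangle p xb z
    rw [dist_comm xb z] at this
    -- dist p z ≤ dist p xb + dist z xb < ρ/8 + ρ/8 = ρ/4 = δ', contradiction
    have : δ' ≤ dist p xb + dist z xb := by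
      rw [← hpz]; calc dist p z ≤ dist p xb + dist xb z := dist_triangle _ _ _
      _ = dist p xb + dist z xb := by rw [dist_comm xb z]
    linarith
  constructor
  · -- expansivity
    intro x₁ h₁ x₂ h₂
    apply hexp xb
    · rw [mem_closedBall] at h₁ ⊢
      calc dist x₁ xb ≤ dist x₁ z + dist z xb := dist_triangle _ _ _
      _ ≤ 4*(δ/8) + ρ xb / 8 := by linarith
      _ ≤ ρ xb / 8 + ρ xb / 8 := by linarith
      _ ≤ ρ xb / 4 := by linarith
    · rw [mem_closedBall] at h₂ ⊢
      calc dist x₂ xb ≤ dist x₂ z + dist z xb := dist_triangle _ _ _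
      _ ≤ 4*(δ/8) + ρ xb / 8 := by linarith
      _ ≤ ρ xb / 8 + ρ xb / 8 := by linarith
      _ ≤ ρ xb / 4 := by linarith
  · -- covering
    intro r hr0 hrρ₀
    apply hCov xb z
    · rw [mem_closedBall]; linarith [hρ0 xb]
    · exact hr0
    · linarith

set_option maxHeartbeats 1000000 in
/-- Lifting of segments. -/
theorem lift_segment {f : EE → EE} {c : ℝ} (hc : 0 < c) {ρ₀ : ℝ} (hρ₀ : 0 < ρ₀)
    (x₀ : EE) (y₁ : EE)
    (hg : ∀ z ∈ closedBall x₀ (‖y₁ - f x₀‖ / c), GoodAt f c z ρ₀) :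
    ∃ x : ℝ → EE, x 0 = x₀ ∧
      (∀ t ∈ Icc (0:ℝ) 1, f (x t) = f x₀ + t • (y₁ - f x₀)) ∧
      (∀ s ∈ Icc (0:ℝ) 1, ∀ t ∈ Icc (0:ℝ) 1,
        c * ‖x t - x s‖ ≤ |t - s| * ‖y₁ - f x₀‖) := by
  classical
  set γ : ℝ → EE := fun t => f x₀ + t • (y₁ - f x₀) with hγdef
  set L : ℝ := ‖y₁ - f x₀‖ with hLdef
  have hL0 : 0 ≤ L := norm_nonneg _
  have hγ : ∀ s t : ℝ, ‖γ t - γ s‖ = |t - s| * L := by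
    intro s t
    have : γ t - γ s = (t - s) • (y₁ - f x₀) := by
      simp only [hγdef]
      rw [sub_smul]
      abel
    rw [this, norm_smul, Real.norm_eq_abs]
  obtain ⟨N, hN⟩ := exists_nat_gt (L / (c * ρ₀))
  have hcρ : 0 < c * ρ₀ := mul_pos hc hρ₀
  have hN0 : 0 < (N:ℝ) := lt_of_le_of_lt (div_nonneg hL0 hcρ.le) hN
  have hLN : L / N < c * ρ₀ := by
    rw [div_lt_iff₀ hN0]
    rw [div_lt_iff₀ hcρ] at hN
    nlinarith
  have main : ∀ k : ℕ, (k:ℝ) ≤ N → ∃ x : ℝ → EE, x 0 = x₀ ∧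
      (∀ t ∈ Icc (0:ℝ) ((k:ℝ)/N), f (x t) = γ t) ∧
      (∀ s ∈ Icc (0:ℝ) ((k:ℝ)/N), ∀ t ∈ Icc (0:ℝ) ((k:ℝ)/N),
        c * ‖x t - x s‖ ≤ |t - s| * L) := by
    intro k
    induction k with
    | zero =>
      intro _
      refine ⟨fun _ => x₀, rfl, ?_, ?_⟩
      · intro t ht
        simp only [Nat.cast_zero, zero_div, Icc_self, mem_singleton_iff] at ht
        simp [ht, hγdef]
      · intro s hs t ht
        simp only [Nat.cast_zero, zero_div, Icc_self, mem_singleton_iff] at hs ht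
        simp [hs, ht]
    | succ k ih =>
      intro hk1
      have hcast : ((k+1:ℕ):ℝ) = (k:ℝ) + 1 := by push_cast; ring
      rw [hcast] at hk1 ⊢
      have hkN : (k:ℝ) ≤ N := by linarith
      obtain ⟨x, hx0, hfx, hlip⟩ := ih hkN
      set a : ℝ := (k:ℝ)/N with hadef
      have ha0 : 0 ≤ a := div_nonneg (Nat.cast_nonneg _) hN0.le
      have haI : a ∈ Icc (0:ℝ) a := ⟨ha0, le_refl _⟩
      set z := x a with hzdef
      have hfz : f z = γ a := hfx a haI
      have hzx₀ : c * ‖z - x₀‖ ≤ a * L := by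
        have h := hlip 0 ⟨le_refl _, ha0⟩ a haI
        rw [hx0, sub_zero, abs_of_nonneg ha0] at h
        exact h
      have hzK : z ∈ closedBall x₀ (L / c) := by
        rw [mem_closedBall, dist_eq_norm, le_div_iff₀ hc, mul_comm]
        have ha1 : a ≤ 1 := by
          rw [hadef, div_le_one hN0]; exact hkN
        nlinarith
      obtain ⟨hexp, hcov⟩ := hg z hzK
      have hsplit : ((k:ℝ) + 1)/N = a + 1/N := by
        rw [hadef]; ring
      have hstep : ∀ t : ℝ, a < t → t ≤ ((k:ℝ)+1)/N → γ t ∈ ball (f z) (c * ρ₀) := by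
        intro t hat htk
        rw [mem_ball, dist_eq_norm, hfz, hγ]
        rw [hsplit] at htk
        calc |t - a| * L ≤ (1/N) * L := by
              rw [abs_of_pos (by linarith)]
              apply mul_le_mul_of_nonneg_right _ hL0
              linarith
        _ = L / N := by ring
        _ < c * ρ₀ := hLN
      have hpre : ∀ t : ℝ, a < t → t ≤ ((k:ℝ)+1)/N →
          ∃ x', x' ∈ ball z ρ₀ ∧ f x' = γ t := by
        intro t hat htk
        obtain ⟨x', hx', hfx'⟩ := hcov ρ₀ hρ₀ (le_refl _) (hstep t hat htk)
        exact ⟨x', hx', hfx'⟩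
      set F : ℝ → EE := fun t =>
        if h : ∃ x', x' ∈ ball z ρ₀ ∧ f x' = γ t then h.choose else z with hFdef
      have hF : ∀ t : ℝ, a < t → t ≤ ((k:ℝ)+1)/N → F t ∈ ball z ρ₀ ∧ f (F t) = γ t := by
        intro t hat htk
        have h := hpre t hat htk
        simp only [hFdef, dif_pos h]
        exact h.choose_spec
      have hball4 : ∀ w : EE, w ∈ ball z ρ₀ → w ∈ closedBall z (4*ρ₀) := by
        intro w hw
        rw [mem_ball] at hw
        rw [mem_closedBall]
        linarith
      have hz4 : z ∈ closedBall z (4*ρ₀) := mem_closedBall_self (by linarith)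
      have key1 : ∀ t : ℝ, a < t → t ≤ ((k:ℝ)+1)/N → c * ‖F t - z‖ ≤ (t - a) * L := by
        intro t hat htk
        obtain ⟨hm, hf'⟩ := hF t hat htk
        have h := hexp (F t) (hball4 _ hm) z hz4
        rw [hf', hfz, hγ, abs_of_pos (by linarith)] at h
        exact h
      have key2 : ∀ s t : ℝ, a < s → s ≤ ((k:ℝ)+1)/N → a < t → t ≤ ((k:ℝ)+1)/N →
          c * ‖F t - F s‖ ≤ |t - s| * L := by
        intro s t has hsk hat htk
        obtain ⟨hms, hfs⟩ := hF s has hsk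
        obtain ⟨hmt, hft⟩ := hF t hat htk
        have h := hexp (F t) (hball4 _ hmt) (F s) (hball4 _ hms)
        rw [hft, hfs, hγ] at h
        exact h
      refine ⟨fun t => if t ≤ a then x t else F t, ?_, ?_, ?_⟩
      · simp only []
        rw [if_pos ha0, hx0]
      · intro t ht
        rw [mem_Icc] at ht
        by_cases hta : t ≤ a
        · simp only [if_pos hta]
          exact hfx t ⟨ht.1, hta⟩
        · push_neg at hta
          simp only [if_neg (not_le.mpr hta)]
          exact (hF t hta ht.2).2
      · intro s hs t ht
        rw [mem_Icc] at hs ht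
        by_cases hsa : s ≤ a <;> by_cases hta : t ≤ a
        · simp only [if_pos hsa, if_pos hta]
          exact hlip s ⟨hs.1, hsa⟩ t ⟨ht.1, hta⟩
        · push_neg at hta
          simp only [if_pos hsa, if_neg (not_le.mpr hta)]
          have h1 := key1 t hta ht.2
          have h2 := hlip s ⟨hs.1, hsa⟩ a haI
          rw [← hzdef] at h2
          have htri : ‖F t - x s‖ ≤ ‖F t - z‖ + ‖z - x s‖ := by
            have h3 := dist_triangle (F t) z (x s)
            simpa [dist_eq_norm] using h3
          have h4 := mul_le_mul_of_nonneg_left htri hc.le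
          have habs1 : |a - s| = a - s := abs_of_nonneg (by linarith)
          have habs2 : |t - s| = t - s := abs_of_nonneg (by linarith)
          rw [habs1] at h2
          rw [habs2]
          nlinarith
        · push_neg at hsa
          simp only [if_neg (not_le.mpr hsa), if_pos hta]
          have h1 := key1 s hsa hs.2
          have h2 := hlip t ⟨ht.1, hta⟩ a haI
          rw [← hzdef] at h2
          have habs1 : |a - t| = a - t := abs_of_nonneg (by linarith)
          rw [habs1] at h2
          have htri : ‖x t - F s‖ ≤ ‖z - x t‖ + ‖F s - z‖ := by
            have h3 := dist_triangle (x t) z (F s)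
            rw [dist_eq_norm, dist_eq_norm, dist_eq_norm, norm_sub_rev (x t) z,
              norm_sub_rev z (F s)] at h3
            exact h3
          have h4 := mul_le_mul_of_nonneg_left htri hc.le
          rw [abs_of_nonpos (by linarith : t - s ≤ 0)]
          nlinarith
        · push_neg at hsa hta
          simp only [if_neg (not_le.mpr hsa), if_neg (not_le.mpr hta)]
          exact key2 s t hsa hs.2 hta ht.2
  obtain ⟨x, hx0, hfx, hlip⟩ := main N (le_refl _)
  have hdiv : (N:ℝ)/N = 1 := div_self (ne_of_gt hN0)
  rw [hdiv] at hfx hlip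
  exact ⟨x, hx0, hfx, hlip⟩

/-- Two lifts over uniformly close paths with close starts stay close. -/
theorem lift_compare {f : EE → EE} {c : ℝ} (hc : 0 < c) {ρ₀ : ℝ} (hρ₀ : 0 < ρ₀)
    {K : Set EE} (hK : ∀ z ∈ K, GoodAt f c z ρ₀)
    {x x' : ℝ → EE} {γ γ' : ℝ → EE}
    (hxc : ContinuousOn x (Icc 0 1)) (hxc' : ContinuousOn x' (Icc 0 1))
    (hfx : ∀ t ∈ Icc (0:ℝ) 1, f (x t) = γ t)
    (hfx' : ∀ t ∈ Icc (0:ℝ) 1, f (x' t) = γ' t)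
    (hmem : ∀ t ∈ Icc (0:ℝ) 1, x t ∈ K)
    (hclose : ∀ t ∈ Icc (0:ℝ) 1, ‖γ t - γ' t‖ ≤ c * ρ₀)
    (hstart : ‖x 0 - x' 0‖ ≤ ρ₀) :
    ∀ t ∈ Icc (0:ℝ) 1, c * ‖x t - x' t‖ ≤ ‖γ t - γ' t‖ := by
  have key : ∀ t ∈ Icc (0:ℝ) 1, ‖x t - x' t‖ ≤ 4*ρ₀ → c * ‖x t - x' t‖ ≤ ‖γ t - γ' t‖ := by
    intro t ht hle
    obtain ⟨hexp, -⟩ := hK (x t) (hmem t ht)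
    have h := hexp (x t) (mem_closedBall_self (by linarith)) (x' t)
      (by rw [mem_closedBall, dist_eq_norm, norm_sub_rev]; exact hle)
    rw [hfx t ht, hfx' t ht] at h
    exact h
  set φ : ℝ → ℝ := fun t => ‖x t - x' t‖ with hφdef
  have hφc : ContinuousOn φ (Icc 0 1) := (hxc.sub hxc').norm
  set S : Set ℝ := {t | t ∈ Icc (0:ℝ) 1 ∧ φ t ≤ ρ₀} with hSdef
  have hsub : Icc (0:ℝ) 1 ⊆ S := by
    have hScl : IsClosed (S ∩ Icc (0:ℝ) 1) := by
      have : S ∩ Icc (0:ℝ) 1 = Icc (0:ℝ) 1 ∩ φ ⁻¹' (Iic ρ₀) := by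
        ext t
        simp only [hSdef, mem_inter_iff, mem_setOf_eq, mem_preimage, mem_Iic]
        tauto
      rw [this]
      exact hφc.preimage_isClosed_of_isClosed isClosed_Icc isClosed_Iic
    apply hScl.Icc_subset_of_forall_exists_gt
    · exact ⟨left_mem_Icc.mpr (by norm_num), hstart⟩
    · rintro u ⟨⟨huI, huφ⟩, hu01⟩ y hy
      rw [mem_Ico] at hu01
      have hcw : ContinuousWithinAt φ (Icc 0 1) u := hφc u huI
      rw [Metric.continuousWithinAt_iff] at hcw
      obtain ⟨d, hd0, hdw⟩ := hcw (3*ρ₀) (by linarith)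
      set w := min (min (u + d/2) y) 1 with hwdef
      have huw : u < w := by
        rw [hwdef]
        simp only [lt_min_iff]
        exact ⟨⟨by linarith, hy⟩, hu01.2⟩
      have hwI : w ∈ Icc (0:ℝ) 1 := by
        constructor
        · linarith [huI.1]
        · exact min_le_right _ _
      have hwd : dist w u < d := by
        rw [Real.dist_eq, abs_of_pos (by linarith)]
        have : w ≤ u + d/2 := le_trans (min_le_left _ _) (min_le_left _ _)
        linarith
      have hφw : φ w < 4*ρ₀ := by
        have := hdw hwI hwd
        rw [Real.dist_eq] at this
        have := abs_lt.mp this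
        linarith
      have hkw := key w hwI (le_of_lt hφw)
      have : φ w ≤ ρ₀ := by
        have hcl := hclose w hwI
        have : c * φ w ≤ c * ρ₀ := le_trans hkw hcl
        nlinarith
      exact ⟨w, ⟨⟨hwI, this⟩, huw, le_trans (min_le_left _ _) (min_le_right _ _)⟩⟩
  intro t ht
  exact key t ht (by linarith [(hsub ht).2])

theorem norm_tri3 (a b c : EE) : ‖a - c‖ ≤ ‖a - b‖ + ‖b - c‖ := by
  simpa [dist_eq_norm] using dist_triangle a b c

set_option maxHeartbeats 1000000 in
/-- Lyusternik–Graves perturbation: openness of `h₀` minus Lipschitzness of `f - h₀`. -/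
theorem lg_perturb {f h₀ : EE → EE} (hf : Continuous f) (xb : EE) {α m m' : ℝ}
    (hm0 : 0 ≤ m) (hmm : m < m') (hm'α : m' < α)
    (hop : LinOpenWith h₀ xb α) (hx : h₀ xb = f xb)
    (hlip : IsLipConstAround (fun x => f x - h₀ x) xb m) :
    LinOpenWith f xb (α - m') := by
  classical
  obtain ⟨Uh, hUh, Vh, hVh, Hop⟩ := hop
  obtain ⟨Ue, hUe, hLip0⟩ := hlip
  have hE : ∀ x₁ ∈ Ue, ∀ x₂ ∈ Ue, ‖(f x₁ - h₀ x₁) - (f x₂ - h₀ x₂)‖ ≤ m * ‖x₁ - x₂‖ := by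
    intro x₁ h₁ x₂ h₂; simpa using hLip0 x₁ h₁ x₂ h₂
  have hxbUe : xb ∈ Ue := mem_of_mem_nhds hUe
  have hα0 : 0 < α := by linarith
  have hαm' : 0 < α - m' := by linarith
  set D : ℝ := α - m' + m with hDdef
  have hD0 : 0 < D := by rw [hDdef]; linarith
  set q : ℝ := m / D with hqdef
  have hq0 : 0 ≤ q := div_nonneg hm0 hD0.le
  have hq1 : q < 1 := by rw [hqdef, div_lt_one hD0]; linarith
  have hfrac : (α - m') / D = 1 - q := by
    rw [hqdef]
    field_simp
    rw [hDdef]; ring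
  obtain ⟨u1, hu10, hu1⟩ := Metric.mem_nhds_iff.mp hUh
  obtain ⟨u2, hu20, hu2⟩ := Metric.mem_nhds_iff.mp hUe
  obtain ⟨v, hv0, hv⟩ := Metric.mem_nhds_iff.mp hVh
  set δ₁ : ℝ := min (min (u1/2) (u2/2)) (v/(2*(m+1))) with hδ₁def
  have hδ₁0 : 0 < δ₁ := by
    apply lt_min (lt_min (by linarith) (by linarith))
    apply div_pos hv0; linarith
  have hδ₁Uh : ∀ z : EE, ‖z - xb‖ ≤ δ₁ → z ∈ Uh := by
    intro z hz
    apply hu1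
    rw [mem_ball, dist_eq_norm]
    calc ‖z - xb‖ ≤ δ₁ := hz
    _ ≤ u1/2 := le_trans (min_le_left _ _) (min_le_left _ _)
    _ < u1 := by linarith
  have hδ₁Ue : ∀ z : EE, ‖z - xb‖ ≤ δ₁ → z ∈ Ue := by
    intro z hz
    apply hu2
    rw [mem_ball, dist_eq_norm]
    calc ‖z - xb‖ ≤ δ₁ := hz
    _ ≤ u2/2 := le_trans (min_le_left _ _) (min_le_right _ _)
    _ < u2 := by linarith
  have hmδ₁ : m * δ₁ ≤ v/2 := by
    have h1 : δ₁ ≤ v/(2*(m+1)) := min_le_right _ _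
    have h2 : m * δ₁ ≤ m * (v/(2*(m+1))) := mul_le_mul_of_nonneg_left h1 hm0
    have h3 : m * (v/(2*(m+1))) ≤ v/2 := by
      have hden : (0:ℝ) < 2*(m+1) := by linarith
      rw [← mul_div_assoc, div_le_div_iff₀ hden (by norm_num)]
      nlinarith
    linarith
  set w : ℝ := min (v/10) ((α - m')*δ₁/4) with hwdef
  have hw0 : 0 < w := lt_min (by linarith) (by positivity)
  have hwv : w ≤ v/10 := min_le_left _ _
  set r₀ : ℝ := 2*w/(α - m') with hr₀def
  have hr₀0 : 0 < r₀ := by positivity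
  have hr₀δ : r₀ ≤ δ₁/2 := by
    rw [hr₀def, div_le_div_iff₀ hαm' (by norm_num)]
    have : w ≤ (α - m')*δ₁/4 := min_le_right _ _
    nlinarith
  obtain ⟨u₀', hu₀'0, hu₀'⟩ := Metric.continuousAt_iff.mp hf.continuousAt w hw0
  set u₀ : ℝ := min u₀' (δ₁/2) with hu₀def
  have hu₀0 : 0 < u₀ := lt_min hu₀'0 (by linarith)
  have hu₀δ : u₀ ≤ δ₁/2 := min_le_right _ _
  refine ⟨ball xb u₀, ball_mem_nhds _ hu₀0, ball (f xb) w, ball_mem_nhds _ hw0, ?_⟩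
  intro x hxU r hr0 y hy
  obtain ⟨hyb, hyV⟩ := hy
  rw [mem_ball, dist_eq_norm] at hyb hyV hxU
  by_cases hyx : y = f x
  · exact ⟨x, mem_ball_self hr0, hyx.symm⟩
  have hfxw : ‖f x - f xb‖ < w := by
    have h := hu₀' (show dist x xb < u₀' by
      rw [dist_eq_norm]; exact lt_of_lt_of_le hxU (min_le_left _ _))
    rwa [dist_eq_norm] at h
  have hyfxb2 : ‖y - f x‖ < 2*w := by
    calc ‖y - f x‖ ≤ ‖y - f xb‖ + ‖f xb - f x‖ := norm_tri3 _ _ _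
    _ = ‖y - f xb‖ + ‖f x - f xb‖ := by rw [norm_sub_rev (f xb)]
    _ < 2*w := by linarith
  set rt : ℝ := min r r₀ with hrtdef
  have hrt0 : 0 < rt := lt_min hr0 hr₀0
  have hrtr : rt ≤ r := min_le_left _ _
  have hrtr₀ : rt ≤ r₀ := min_le_right _ _
  have hyfx : ‖y - f x‖ < (α - m') * rt := by
    rcases le_or_gt r r₀ with h | h
    · rw [hrtdef, min_eq_left h]; exact hyb
    · rw [hrtdef, min_eq_right h.le, hr₀def, mul_div_cancel₀ _ (ne_of_gt hαm')]
      exact hyfxb2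
  -- the iteration
  set nxt : EE → EE := fun u =>
    if h : ∃ u', h₀ u' = h₀ u + (y - f u) ∧ dist u' u < ‖y - f u‖ / D then h.choose else u
    with hnxtdef
  set sq : ℕ → EE := fun k => nxt^[k] x with hsqdef
  have hsqS : ∀ k, sq (k+1) = nxt (sq k) := by
    intro k; rw [hsqdef]; exact Function.iterate_succ_apply' _ _ _
  have hstep : ∀ u : EE, dist (nxt u) u ≤ ‖y - f u‖ / D := by
    intro u
    simp only [hnxtdef]
    by_cases h : ∃ u', h₀ u' = h₀ u + (y - f u) ∧ dist u' u < ‖y - f u‖ / D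
    · rw [dif_pos h]; exact h.choose_spec.2.le
    · rw [dif_neg h]
      simp [div_nonneg (norm_nonneg _) hD0.le]
  have inv : ∀ k : ℕ, ‖y - f (sq k)‖ ≤ q^k * ‖y - f x‖ ∧
      (α - m') * ‖sq k - x‖ ≤ ‖y - f x‖ - ‖y - f (sq k)‖ := by
    intro k
    induction k with
    | zero => constructor <;> simp [hsqdef]
    | succ k ih =>
      obtain ⟨I1, I2⟩ := ih
      set u := sq k with hudef
      have hqk1 : q^k ≤ 1 := pow_le_one₀ hq0 hq1.le
      have hyfu : ‖y - f u‖ ≤ ‖y - f x‖ := by nlinarith only [I1, hqk1, norm_nonneg (y - f x), norm_nonneg (y - f u)]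
      have hux : ‖u - x‖ < rt := by
        have h1 : (α - m') * ‖u - x‖ < (α - m') * rt := by
          linarith only [I2, hyfx, norm_nonneg (y - f u)]
        exact lt_of_mul_lt_mul_left h1 hαm'.le
      have huxb : ‖u - xb‖ ≤ δ₁ := by
        calc ‖u - xb‖ ≤ ‖u - x‖ + ‖x - xb‖ := norm_tri3 _ _ _
        _ ≤ δ₁/2 + δ₁/2 := by linarith only [hux, hxU, hrtr₀, hr₀δ, hu₀δ]
        _ = δ₁ := by ring
      by_cases hfu : f u = y
      · have hnu : nxt u = u := by
          rw [hnxtdef]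
          apply dif_neg
          rintro ⟨u', -, hd⟩
          rw [hfu] at hd
          simp at hd
          exact absurd hd (not_lt.mpr dist_nonneg)
        rw [hsqS, ← hudef, hnu]
        constructor
        · rw [hfu]
          simp [mul_nonneg (pow_nonneg hq0 _) (norm_nonneg _)]
        · exact I2
      · have hyfu0 : 0 < ‖y - f u‖ := by
          rw [norm_pos_iff, sub_ne_zero]
          exact fun h => hfu h.symm
        set s : ℝ := ‖y - f u‖ / D with hsdef
        have hs0 : 0 < s := div_pos hyfu0 hD0
        have htargetV : h₀ u + (y - f u) ∈ Vh := by
          apply hv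
          rw [mem_ball, dist_eq_norm]
          have h2 := hE u (hδ₁Ue u huxb) xb hxbUe
          have hid : h₀ u - h₀ xb = (f u - f xb) - ((f u - h₀ u) - (f xb - h₀ xb)) := by
            abel
          have h1 : ‖h₀ u - h₀ xb‖ ≤ ‖f u - f xb‖ + m * ‖u - xb‖ := by
            rw [hid]
            calc ‖(f u - f xb) - ((f u - h₀ u) - (f xb - h₀ xb))‖
                ≤ ‖f u - f xb‖ + ‖(f u - h₀ u) - (f xb - h₀ xb)‖ := norm_sub_le _ _
            _ ≤ ‖f u - f xb‖ + m * ‖u - xb‖ := by linarith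
          have h3 : ‖f u - f xb‖ ≤ ‖f u - y‖ + ‖y - f xb‖ := norm_tri3 _ _ _
          have h4 : ‖f u - y‖ = ‖y - f u‖ := norm_sub_rev _ _
          have h5 : m * ‖u - xb‖ ≤ m * δ₁ := mul_le_mul_of_nonneg_left huxb hm0
          have h6 : ‖y - f u‖ < 2*w := lt_of_le_of_lt hyfu hyfxb2
          have hid2 : h₀ u + (y - f u) - h₀ xb = (h₀ u - h₀ xb) + (y - f u) := by abel
          calc ‖h₀ u + (y - f u) - h₀ xb‖ = ‖(h₀ u - h₀ xb) + (y - f u)‖ := by rw [hid2]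
          _ ≤ ‖h₀ u - h₀ xb‖ + ‖y - f u‖ := norm_add_le _ _
          _ < (2*w + w + m*δ₁) + 2*w := by linarith only [h1, h3, h4, h5, h6, hyV]
          _ ≤ v := by linarith only [hwv, hmδ₁]
        have htargetB : h₀ u + (y - f u) ∈ ball (h₀ u) (α * s) := by
          rw [mem_ball, dist_eq_norm, add_sub_cancel_left]
          have hsa : α * s = (α/D) * ‖y - f u‖ := by rw [hsdef]; ring
          have hαD : 1 < α/D := by
            rw [lt_div_iff₀ hD0, one_mul, hDdef]; linarith
          rw [hsa]
          nlinarith only [hαD, hyfu0]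
        obtain ⟨u', hu'ball, hu'eq⟩ :=
          Hop u (hδ₁Uh u huxb) s hs0 ⟨htargetB, htargetV⟩
        have hex : ∃ z, h₀ z = h₀ u + (y - f u) ∧ dist z u < ‖y - f u‖ / D :=
          ⟨u', hu'eq, by rw [mem_ball] at hu'ball; exact hu'ball⟩
        have hnu : nxt u = hex.choose := by
          simp only [hnxtdef]
          rw [dif_pos hex]
        obtain ⟨heq, hdist⟩ := hex.choose_spec
        set v' := hex.choose with hv'def
        have hv'u : ‖v' - u‖ ≤ s := by
          rw [← dist_eq_norm]; exact hdist.le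
        have hfv : f v' - y = (f v' - h₀ v') - (f u - h₀ u) := by
          rw [heq]; abel
        have hαs : (α - m') * s = (1-q) * ‖y - f u‖ := by
          rw [hsdef, mul_comm (1-q), ← hfrac]
          ring
        have hms : m * s = q * ‖y - f u‖ := by
          rw [hsdef, hqdef]; ring
        have hv'x : (α - m') * ‖v' - x‖ ≤ ‖y - f x‖ - q * ‖y - f u‖ := by
          have htri : ‖v' - x‖ ≤ ‖v' - u‖ + ‖u - x‖ := norm_tri3 _ _ _
          have h7 := mul_le_mul_of_nonneg_left htri hαm'.le
          have h8 := mul_le_mul_of_nonneg_left hv'u hαm'.le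
          nlinarith only [h7, h8, hαs, I2]
        have hv'xrt : ‖v' - x‖ < rt := by
          have h9 : (α - m') * ‖v' - x‖ < (α - m') * rt := by
            linarith only [hv'x, hyfx, mul_nonneg hq0 (norm_nonneg (y - f u))]
          exact lt_of_mul_lt_mul_left h9 hαm'.le
        have hv'xb : ‖v' - xb‖ ≤ δ₁ := by
          calc ‖v' - xb‖ ≤ ‖v' - x‖ + ‖x - xb‖ := norm_tri3 _ _ _
          _ ≤ δ₁/2 + δ₁/2 := by linarith
          _ = δ₁ := by ring
        have hnew : ‖y - f v'‖ ≤ q * ‖y - f u‖ := by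
          have h10 := hE v' (hδ₁Ue v' hv'xb) u (hδ₁Ue u huxb)
          have h11 : ‖y - f v'‖ = ‖(f v' - h₀ v') - (f u - h₀ u)‖ := by
            rw [← hfv, norm_sub_rev]
          rw [h11]
          calc ‖(f v' - h₀ v') - (f u - h₀ u)‖ ≤ m * ‖v' - u‖ := h10
          _ ≤ m * s := mul_le_mul_of_nonneg_left hv'u hm0
          _ = q * ‖y - f u‖ := hms
        rw [hsqS, ← hudef, hnu]
        constructor
        · calc ‖y - f v'‖ ≤ q * ‖y - f u‖ := hnew
          _ ≤ q * (q^k * ‖y - f x‖) := mul_le_mul_of_nonneg_left I1 hq0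
          _ = q^(k+1) * ‖y - f x‖ := by ring
        · linarith only [hv'x, hnew]
  -- convergence
  have hCauchy : CauchySeq sq := by
    apply cauchySeq_of_le_geometric q (‖y - f x‖ / D) hq1
    intro k
    have h1 := hstep (sq k)
    rw [← hsqS, dist_comm] at h1
    have h2 := (inv k).1
    calc dist (sq k) (sq (k+1)) ≤ ‖y - f (sq k)‖ / D := h1
    _ ≤ (q^k * ‖y - f x‖) / D := by
        gcongr
    _ = ‖y - f x‖ / D * q^k := by ring
  obtain ⟨xs, hxs⟩ := cauchySeq_tendsto_of_complete hCauchy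
  have hfy : Filter.Tendsto (fun k => f (sq k)) Filter.atTop (nhds (f xs)) :=
    ((hf.tendsto xs).comp hxs)
  have hdist0 : Filter.Tendsto (fun k => ‖y - f (sq k)‖) Filter.atTop (nhds 0) := by
    apply squeeze_zero (fun k => norm_nonneg _) (fun k => (inv k).1)
    have := (tendsto_pow_atTop_nhds_zero_of_lt_one hq0 hq1).mul_const ‖y - f x‖
    simpa using this
  have hfy2 : Filter.Tendsto (fun k => f (sq k)) Filter.atTop (nhds y) := by
    rw [tendsto_iff_norm_sub_tendsto_zero]
    simpa [norm_sub_rev] using hdist0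
  have hfxy : f xs = y := tendsto_nhds_unique hfy hfy2
  have hlim : Filter.Tendsto (fun k => (α - m') * ‖sq k - x‖) Filter.atTop
      (nhds ((α - m') * ‖xs - x‖)) := by
    exact ((hxs.sub_const x).norm).const_mul _
  have hxsx : (α - m') * ‖xs - x‖ ≤ ‖y - f x‖ := by
    apply le_of_tendsto hlim
    apply Filter.Eventually.of_forall
    intro k
    linarith only [(inv k).2, norm_nonneg (y - f (sq k))]
  have hxsr : ‖xs - x‖ < r := by
    have h9 : (α - m') * ‖xs - x‖ < (α - m') * rt := by linarith
    have := lt_of_mul_lt_mul_left h9 hαm'.le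
    linarith
  exact ⟨xs, by rw [mem_ball, dist_eq_norm]; exact hxsr, hfxy⟩

theorem liftlip_continuousOn {x : ℝ → EE} {c L : ℝ} (hc : 0 < c) (hL : 0 ≤ L)
    (h : ∀ s ∈ Icc (0:ℝ) 1, ∀ t ∈ Icc (0:ℝ) 1, c * ‖x t - x s‖ ≤ |t - s| * L) :
    ContinuousOn x (Icc 0 1) := by
  have hlip : LipschitzOnWith (Real.toNNReal (L/c)) x (Icc 0 1) := by
    apply LipschitzOnWith.of_dist_le_mul
    intro s hs t ht
    have h1 := h t ht s hs
    rw [dist_eq_norm, Real.dist_eq, Real.coe_toNNReal _ (div_nonneg hL hc.le)]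
    rw [← sub_nonneg]
    have h2 : L/c * |s - t| - ‖x s - x t‖ = (|s - t| * L - c * ‖x s - x t‖)/c := by
      field_simp
    rw [h2]
    exact div_nonneg (by linarith) hc.le
  exact hlip.continuousOn

set_option maxHeartbeats 1000000 in
theorem global_bij {f : EE → EE} {c : ℝ} (hc : 0 < c) (hf : Continuous f)
    (hnt : ∃ v : EE, v ≠ 0)
    (hgood : ∀ xb : EE, ∃ ρ > (0:ℝ), Set.InjOn f (closedBall xb ρ) ∧
      ∀ x ∈ closedBall xb ρ, ∀ r : ℝ, 0 < r → r ≤ ρ →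
        ball (f x) (c*r) ⊆ f '' ball x r) :
    Function.Bijective f := by
  classical
  constructor
  · -- injectivity
    intro a b hab
    set y := f a with hydef
    set p : ℝ → EE := fun t => a + t • (b - a) with hpdef
    have hp0 : p 0 = a := by simp [hpdef]
    have hp1 : p 1 = b := by simp [hpdef]
    have hpc : Continuous p := continuous_const.add (continuous_id.smul continuous_const)
    obtain ⟨M0, hM0⟩ := (isCompact_Icc : IsCompact (Icc (0:ℝ) 1)).exists_bound_of_continuousOn
      (f := fun t => y - f (p t)) (continuous_const.sub (hf.comp hpc)).continuousOn
    set M := max M0 0 with hMdef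
    have hM : ∀ t ∈ Icc (0:ℝ) 1, ‖y - f (p t)‖ ≤ M :=
      fun t ht => le_trans (hM0 t ht) (le_max_left _ _)
    have hMnn : 0 ≤ M := le_max_right _ _
    set R := ‖a‖ + ‖b - a‖ + M/c with hRdef
    set K := closedBall (0:EE) R with hKdef
    have hpnorm : ∀ t ∈ Icc (0:ℝ) 1, ‖p t‖ ≤ ‖a‖ + ‖b - a‖ := by
      intro t ht
      rw [mem_Icc] at ht
      rw [hpdef]
      calc ‖a + t • (b-a)‖ ≤ ‖a‖ + ‖t • (b-a)‖ := norm_add_le _ _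
      _ = ‖a‖ + |t| * ‖b-a‖ := by rw [norm_smul, Real.norm_eq_abs]
      _ ≤ ‖a‖ + 1 * ‖b-a‖ := by
          have h1 : |t| ≤ 1 := abs_le.mpr ⟨by linarith [ht.1], ht.2⟩
          nlinarith [norm_nonneg (b-a)]
      _ = ‖a‖ + ‖b-a‖ := by ring
    have hpK : ∀ t ∈ Icc (0:ℝ) 1, ∀ z ∈ closedBall (p t) (‖y - f (p t)‖/c), z ∈ K := by
      intro t ht z hz
      rw [hKdef, mem_closedBall, dist_zero_right]
      rw [mem_closedBall, dist_eq_norm] at hz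
      have h2 : ‖y - f (p t)‖/c ≤ M/c := by
        rw [div_le_div_iff₀ hc hc]
        nlinarith [hM t ht, hc]
      have h3 : ‖z‖ ≤ ‖z - p t‖ + ‖p t‖ := by
        have := norm_tri3 z (p t) 0
        simpa using this
      have := hpnorm t ht
      rw [hRdef]
      linarith
    obtain ⟨ρ₀, hρ₀0, hKgood⟩ := uniform_good hc hnt hgood (isCompact_closedBall (0:EE) R)
    have hWex : ∀ t ∈ Icc (0:ℝ) 1, ∃ W : ℝ → EE, W 0 = p t ∧
        (∀ s ∈ Icc (0:ℝ) 1, f (W s) = f (p t) + s • (y - f (p t))) ∧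
        (∀ s ∈ Icc (0:ℝ) 1, ∀ u ∈ Icc (0:ℝ) 1,
          c * ‖W u - W s‖ ≤ |u - s| * ‖y - f (p t)‖) := by
      intro t ht
      exact lift_segment hc hρ₀0 (p t) y (fun z hz => hKgood z (hpK t ht z hz))
    choose W hW0 hWf hWlip using hWex
    set eW : ℝ → EE := fun t => if ht : t ∈ Icc (0:ℝ) 1 then W t ht 1 else a with heWdef
    have hWmem : ∀ t : ℝ, ∀ ht : t ∈ Icc (0:ℝ) 1, ∀ s ∈ Icc (0:ℝ) 1, W t ht s ∈ K := by
      intro t ht s hs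
      apply hpK t ht
      rw [mem_closedBall, dist_eq_norm]
      have h1 := hWlip t ht 0 ⟨le_refl _, zero_le_one⟩ s hs
      rw [hW0, sub_zero] at h1
      rw [mem_Icc] at hs
      have h2 : |s| ≤ 1 := abs_le.mpr ⟨by linarith [hs.1], hs.2⟩
      rw [le_div_iff₀ hc]
      have h3 : |s| * ‖y - f (p t)‖ ≤ ‖y - f (p t)‖ := by
        nlinarith [norm_nonneg (y - f (p t))]
      calc ‖W t ht s - p t‖ * c = c * ‖W t ht s - p t‖ := by ring
      _ ≤ |s| * ‖y - f (p t)‖ := h1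
      _ ≤ ‖y - f (p t)‖ := h3
    have hconst : ∀ t₀, ∀ ht₀ : t₀ ∈ Icc (0:ℝ) 1, ∃ d > (0:ℝ),
        ∀ t, ∀ ht : t ∈ Icc (0:ℝ) 1, |t - t₀| < d → W t ht 1 = W t₀ ht₀ 1 := by
      intro t₀ ht₀
      have hδc : ContinuousAt (fun t => f (p t)) t₀ := (hf.comp hpc).continuousAt
      rw [Metric.continuousAt_iff] at hδc
      obtain ⟨d1, hd10, hd1⟩ := hδc (c*ρ₀) (mul_pos hc hρ₀0)
      set d2 := ρ₀/(‖b - a‖ + 1) with hd2def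
      have hd20 : 0 < d2 := by
        apply div_pos hρ₀0
        have := norm_nonneg (b - a); linarith
      refine ⟨min d1 d2, lt_min hd10 hd20, ?_⟩
      intro t ht htd
      have htd1 : |t - t₀| < d1 := lt_of_lt_of_le htd (min_le_left _ _)
      have htd2 : |t - t₀| < d2 := lt_of_lt_of_le htd (min_le_right _ _)
      have hδ : ‖f (p t) - f (p t₀)‖ < c*ρ₀ := by
        have := hd1 (show dist t t₀ < d1 by rwa [Real.dist_eq])
        rwa [dist_eq_norm] at this
      have hpt : ‖p t₀ - p t‖ ≤ ρ₀ := by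
        have h1 : p t₀ - p t = (t₀ - t) • (b - a) := by
          rw [hpdef]; simp only []
          rw [sub_smul]; abel
        rw [h1, norm_smul, Real.norm_eq_abs]
        have h2 : |t₀ - t| < d2 := by rwa [abs_sub_comm]
        rw [hd2def] at h2
        have hB : (0:ℝ) < ‖b - a‖ + 1 := by linarith [norm_nonneg (b-a)]
        rw [lt_div_iff₀ hB] at h2
        nlinarith [abs_nonneg (t₀ - t), norm_nonneg (b - a)]
      have hcomp := lift_compare hc hρ₀0 hKgood
        (x := W t₀ ht₀) (x' := W t ht)
        (γ := fun s => f (p t₀) + s • (y - f (p t₀)))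
        (γ' := fun s => f (p t) + s • (y - f (p t)))
        (liftlip_continuousOn hc (norm_nonneg _) (hWlip t₀ ht₀))
        (liftlip_continuousOn hc (norm_nonneg _) (hWlip t ht))
        (hWf t₀ ht₀) (hWf t ht) (hWmem t₀ ht₀)
        ?_ ?_
      · have h1I : (1:ℝ) ∈ Icc (0:ℝ) 1 := ⟨zero_le_one, le_refl _⟩
        have h2 := hcomp 1 h1I
        simp only [one_smul] at h2
        have h3 : f (p t₀) + (y - f (p t₀)) - (f (p t) + (y - f (p t))) = 0 := by abel
        rw [h3, norm_zero] at h2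
        have h4 : ‖W t₀ ht₀ 1 - W t ht 1‖ ≤ 0 := by nlinarith
        have h5 : W t₀ ht₀ 1 - W t ht 1 = 0 := by
          rw [← norm_le_zero_iff]; exact h4
        rw [sub_eq_zero] at h5
        exact h5.symm
      · -- hclose
        intro s hs
        rw [mem_Icc] at hs
        have h1 : (fun s => f (p t₀) + s • (y - f (p t₀))) s -
            (fun s => f (p t) + s • (y - f (p t))) s = (1 - s) • (f (p t₀) - f (p t)) := by
          simp only [smul_sub, sub_smul, one_smul]
          abel
        rw [h1, norm_smul, Real.norm_eq_abs]
        have h2 : |1 - s| ≤ 1 := abs_le.mpr ⟨by linarith, by linarith⟩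
        have hδ' : ‖f (p t₀) - f (p t)‖ < c*ρ₀ := by rw [norm_sub_rev]; exact hδ
        nlinarith [abs_nonneg (1 - s), norm_nonneg (f (p t₀) - f (p t))]
      · -- hstart
        rw [hW0, hW0]
        exact hpt
    -- continuous induction over [0,1]
    have h0I : (0:ℝ) ∈ Icc (0:ℝ) 1 := ⟨le_refl _, zero_le_one⟩
    have h1I : (1:ℝ) ∈ Icc (0:ℝ) 1 := ⟨zero_le_one, le_refl _⟩
    have heWconst : ∀ t₀ ∈ Icc (0:ℝ) 1, ∃ d > (0:ℝ),
        ∀ t ∈ Icc (0:ℝ) 1, |t - t₀| < d → eW t = eW t₀ := by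
      intro t₀ ht₀
      obtain ⟨d, hd0, hd⟩ := hconst t₀ ht₀
      refine ⟨d, hd0, ?_⟩
      intro t ht htd
      rw [heWdef]
      simp only [dif_pos ht, dif_pos ht₀]
      exact hd t ht htd
    have hsub : Icc (0:ℝ) 1 ⊆ {t | eW t = eW 0} := by
      have hclosed : IsClosed ({t | eW t = eW 0} ∩ Icc (0:ℝ) 1) := by
        rw [← isOpen_compl_iff, Metric.isOpen_iff]
        intro x hx
        by_cases hxI : x ∈ Icc (0:ℝ) 1
        · have hxne : eW x ≠ eW 0 := by
            intro hcontra
            exact hx ⟨hcontra, hxI⟩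
          obtain ⟨d, hd0, hd⟩ := heWconst x hxI
          refine ⟨d, hd0, ?_⟩
          intro u hu
          rw [mem_ball, Real.dist_eq] at hu
          rintro ⟨huS, huI⟩
          exact hxne (by rw [← hd u huI hu]; exact huS)
        · obtain ⟨ε, hε0, hε⟩ := Metric.isOpen_iff.mp isClosed_Icc.isOpen_compl x hxI
          refine ⟨ε, hε0, ?_⟩
          intro u hu
          rintro ⟨-, huI⟩
          exact hε hu huI
      apply hclosed.Icc_subset_of_forall_exists_gt
      · rfl
      · rintro u ⟨huS, huIco⟩ y' hy'
        rw [mem_Ico] at huIco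
        obtain ⟨d, hd0, hd⟩ := heWconst u ⟨huIco.1, huIco.2.le⟩
        rw [mem_Ioi] at hy'
        set w := min (min (u + d/2) y') 1 with hwdef
        have huw : u < w := by
          rw [hwdef]
          simp only [lt_min_iff]
          exact ⟨⟨by linarith, hy'⟩, huIco.2⟩
        have hwI : w ∈ Icc (0:ℝ) 1 := ⟨by linarith [huIco.1], min_le_right _ _⟩
        have hwd : |w - u| < d := by
          rw [abs_of_pos (by linarith)]
          have : w ≤ u + d/2 := le_trans (min_le_left _ _) (min_le_left _ _)
          linarith
        refine ⟨w, ?_, huw, le_trans (min_le_left _ _) (min_le_right _ _)⟩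
        show eW w = eW 0
        rw [hd w hwI hwd]
        exact huS
    have hend : eW 1 = eW 0 := hsub h1I
    have heW0 : eW 0 = a := by
      rw [heWdef]
      simp only [dif_pos h0I]
      have h1 := hWlip 0 h0I 0 h0I 1 h1I
      have h2 : f (p 0) = y := by rw [hp0]
      rw [h2, sub_self, norm_zero, mul_zero] at h1
      have h3 : W 0 h0I 1 - W 0 h0I 0 = 0 := by
        rw [← norm_le_zero_iff]
        nlinarith
      rw [sub_eq_zero] at h3
      rw [h3, hW0, hp0]
    have heW1 : eW 1 = b := by
      rw [heWdef]
      simp only [dif_pos h1I]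
      have h1 := hWlip 1 h1I 0 h0I 1 h1I
      have h2 : f (p 1) = y := by rw [hp1, hab]
      rw [h2, sub_self, norm_zero, mul_zero] at h1
      have h3 : W 1 h1I 1 - W 1 h1I 0 = 0 := by
        rw [← norm_le_zero_iff]
        nlinarith
      rw [sub_eq_zero] at h3
      rw [h3, hW0, hp1]
    rw [heW0, heW1] at hend
    exact hend.symm
  · -- surjectivity
    intro y
    obtain ⟨ρ₀, hρ₀0, hKgood⟩ := uniform_good hc hnt hgood
      (isCompact_closedBall (0:EE) (‖y - f 0‖/c))
    obtain ⟨x, hx0, hfx, -⟩ := lift_segment hc hρ₀0 0 y (fun z hz => hKgood z hz)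
    refine ⟨x 1, ?_⟩
    have h1 := hfx 1 ⟨zero_le_one, le_refl (1:ℝ)⟩
    rw [h1, one_smul]
    abel

theorem inv_lip {f : EE → EE} {c : ℝ} (hc : 0 < c) (hf : Continuous f)
    (hnt : ∃ v : EE, v ≠ 0)
    (hgood : ∀ xb : EE, ∃ ρ > (0:ℝ), Set.InjOn f (closedBall xb ρ) ∧
      ∀ x ∈ closedBall xb ρ, ∀ r : ℝ, 0 < r → r ≤ ρ →
        ball (f x) (c*r) ⊆ f '' ball x r)
    {g : EE → EE} (hgf : ∀ x, g (f x) = x) (hfg : ∀ y, f (g y) = y) :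
    ∀ y₀ y₁ : EE, c * ‖g y₁ - g y₀‖ ≤ ‖y₁ - y₀‖ := by
  intro y₀ y₁
  set x₀ := g y₀ with hx₀def
  have hfx₀ : f x₀ = y₀ := hfg y₀
  obtain ⟨ρ₀, hρ₀0, hKgood⟩ := uniform_good hc hnt hgood
    (isCompact_closedBall x₀ (‖y₁ - f x₀‖/c))
  obtain ⟨x, hx0, hfx, hlip⟩ := lift_segment hc hρ₀0 x₀ y₁ (fun z hz => hKgood z hz)
  have h0I : (0:ℝ) ∈ Icc (0:ℝ) 1 := ⟨le_refl _, zero_le_one⟩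
  have h1I : (1:ℝ) ∈ Icc (0:ℝ) 1 := ⟨zero_le_one, le_refl _⟩
  have h1 : f (x 1) = y₁ := by
    rw [hfx 1 h1I, one_smul]
    abel
  have h2 : g y₁ = x 1 := by
    have := hgf (x 1)
    rw [h1] at this
    exact this
  have h3 := hlip 0 h0I 1 h1I
  rw [hx0, hfx₀, sub_zero, abs_one, one_mul] at h3
  rw [h2, hx₀def]
  exact h3

theorem good_from_hyps {f : EE → EE} (hcont : Continuous f)
    {h : EE → EE → EE} {μ : ℝ≥0}
    (hest : ∀ x : EE, IsStrictEstimator f (h x) x μ)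
    (c : ℝ≥0) (hc0 : 0 < c) (hcσ : (c:ℝ≥0∞) < (⨅ x : EE, lopBound (h x) x) - μ) :
    ∀ xb : EE, LinOpenWith f xb (c:ℝ) := by
  intro xb
  have h1 : (μ:ℝ≥0∞) + c < ⨅ x : EE, lopBound (h x) x := by
    rw [← lt_tsub_iff_left]
    exact hcσ
  obtain ⟨σ', hσ'1, hσ'2⟩ := ENNReal.lt_iff_exists_nnreal_btwn.mp h1
  have hσ'r : (μ:ℝ) + (c:ℝ) < (σ':ℝ) := by
    have h2 : ((μ + c : ℝ≥0) : ℝ≥0∞) < (σ' : ℝ≥0∞) := by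
      rw [ENNReal.coe_add]; exact hσ'1
    rw [ENNReal.coe_lt_coe] at h2
    exact_mod_cast h2
  set ε : ℝ := ((σ':ℝ) - (μ:ℝ) - (c:ℝ))/2 with hεdef
  have hε0 : 0 < ε := by rw [hεdef]; linarith
  have h2 : (σ':ℝ≥0∞) < lopBound (h xb) xb :=
    lt_of_lt_of_le hσ'2 (iInf_le _ xb)
  rw [lopBound, lt_iSup_iff] at h2
  obtain ⟨α, h2⟩ := h2
  rw [lt_iSup_iff] at h2
  obtain ⟨⟨hα0, hαopen⟩, hσ'α⟩ := h2
  have hσ'αr : (σ':ℝ) < (α:ℝ) := by exact_mod_cast hσ'α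
  have h3 := (hest xb).2
  have hμε : lipBound (fun x => f x - h xb x) xb < ((μ + Real.toNNReal ε : ℝ≥0) : ℝ≥0∞) := by
    apply lt_of_le_of_lt h3
    rw [ENNReal.coe_lt_coe]
    have h4 : 0 < Real.toNNReal ε := Real.toNNReal_pos.mpr hε0
    exact lt_add_of_pos_right _ h4
  rw [lipBound, iInf_lt_iff] at hμε
  obtain ⟨m, hμε⟩ := hμε
  rw [iInf_lt_iff] at hμε
  obtain ⟨⟨hm0, hmlip⟩, hmlt⟩ := hμε
  have hmr : (m:ℝ) < (μ:ℝ) + ε := by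
    have h4 : (m:ℝ≥0) < μ + Real.toNNReal ε := by exact_mod_cast hmlt
    have h5 := NNReal.coe_lt_coe.mpr h4
    rw [NNReal.coe_add, Real.coe_toNNReal _ hε0.le] at h5
    exact h5
  have hperturb := lg_perturb hcont xb (m := (m:ℝ)) (m' := (μ:ℝ)+ε) (α := (α:ℝ))
    m.coe_nonneg hmr (by linarith [c.coe_nonneg]) hαopen (hest xb).1 hmlip
  apply linOpenWith_mono _ hperturb
  linarith [c.coe_nonneg]


end Aux

/-- Global inversion via strict estimators (Proposition on global invertibility):
if `f` is continuous, admits at each `x` a strict `η_x`-estimator `g_x` with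
`inj(g_x, x) > η_x`, and admits at each `x` a strict `μ`-estimator `h x` with
`σ = inf_x lop(h x, x) > μ`, then `f` is a bijection of `ℝⁿ` whose inverse is
Lipschitz with constant `(σ - μ)⁻¹`. -/
theorem stmt5 (n : ℕ) (f : EuclideanSpace ℝ (Fin n) → EuclideanSpace ℝ (Fin n))
    (μ : ℝ≥0)
    (hcont : Continuous f)
    (hinj : ∀ x : EuclideanSpace ℝ (Fin n), ∃ η : ℝ≥0,
      ∃ g : EuclideanSpace ℝ (Fin n) → EuclideanSpace ℝ (Fin n),
        IsStrictEstimator f g x η ∧ (η : ℝ≥0∞) < injBound g x)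
    (h : EuclideanSpace ℝ (Fin n) →
          EuclideanSpace ℝ (Fin n) → EuclideanSpace ℝ (Fin n))
    (hest : ∀ x, IsStrictEstimator f (h x) x μ)
    (hσ : (μ : ℝ≥0∞) < ⨅ x, lopBound (h x) x) :
    Function.Bijective f ∧
    ∃ g : EuclideanSpace ℝ (Fin n) → EuclideanSpace ℝ (Fin n),
      (∀ x, g (f x) = x) ∧ (∀ y, f (g y) = y) ∧
      ∀ y₁ y₂, (‖g y₁ - g y₂‖₊ : ℝ≥0∞) ≤
        ((⨅ x, lopBound (h x) x) - (μ : ℝ≥0∞))⁻¹ * (‖y₁ - y₂‖₊ : ℝ≥0∞) := by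
  classical
  rcases subsingleton_or_nontrivial (EuclideanSpace ℝ (Fin n)) with hsub | hnt
  · have hbij : Function.Bijective f :=
      ⟨fun a b _ => Subsingleton.elim a b, fun y => ⟨y, Subsingleton.elim _ _⟩⟩
    refine ⟨hbij, id, fun x => Subsingleton.elim _ _, fun y => Subsingleton.elim _ _, ?_⟩
    intro y₁ y₂
    have h1 : y₁ = y₂ := Subsingleton.elim _ _
    subst h1
    simp
  · have hnt' : ∃ v : EuclideanSpace ℝ (Fin n), v ≠ 0 := exists_ne 0
    have hpos : (0:ℝ≥0∞) < (⨅ x, lopBound (h x) x) - μ := tsub_pos_iff_lt.mpr hσ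
    obtain ⟨c₁, hc₁1, hc₁2⟩ := ENNReal.lt_iff_exists_nnreal_btwn.mp hpos
    have hc₁0 : 0 < c₁ := by exact_mod_cast hc₁1
    have hgood : ∀ (cn : ℝ≥0), 0 < cn → (cn:ℝ≥0∞) < (⨅ x, lopBound (h x) x) - μ →
        (∀ xb, ∃ ρ > (0:ℝ), Set.InjOn f (closedBall xb ρ) ∧
          ∀ x ∈ closedBall xb ρ, ∀ r : ℝ, 0 < r → r ≤ ρ →
            ball (f x) ((cn:ℝ)*r) ⊆ f '' ball x r) := by
      intro cn h1 h2
      exact pointwise_good (by exact_mod_cast h1) hcont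
        (good_from_hyps hcont hest cn h1 h2) (local_inj hinj)
    have hbij := global_bij (c := (c₁:ℝ)) (by exact_mod_cast hc₁0) hcont hnt'
      (hgood c₁ hc₁0 hc₁2)
    obtain ⟨g, hgf, hfg⟩ := Function.bijective_iff_has_inverse.mp hbij
    refine ⟨hbij, g, hgf, hfg, ?_⟩
    intro y₁ y₂
    set σ := ⨅ x, lopBound (h x) x with hσdef
    set X := (‖g y₁ - g y₂‖₊ : ℝ≥0∞) with hXdef
    set Y := (‖y₁ - y₂‖₊ : ℝ≥0∞) with hYdef
    have hXr : ∀ cn : ℝ≥0, 0 < cn → (cn:ℝ≥0∞) < σ - μ → X * cn ≤ Y := by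
      intro cn h1 h2
      have h3 := inv_lip (c := (cn:ℝ)) (by exact_mod_cast h1) hcont hnt'
        (hgood cn h1 h2) hgf hfg y₂ y₁
      rw [hXdef, hYdef, ← ENNReal.coe_mul, ENNReal.coe_le_coe, ← NNReal.coe_le_coe]
      push_cast
      linarith
    by_cases hX0 : X = 0
    · rw [hX0]; exact zero_le
    · have hXtop : X ≠ ⊤ := ENNReal.coe_ne_top
      have hT : σ - μ ≤ Y / X := by
        apply ENNReal.le_of_forall_nnreal_lt
        intro r hr
        rcases eq_or_lt_of_le (zero_le : (0:ℝ≥0) ≤ r) with hr0 | hr0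
        · rw [← hr0]; simp
        · rw [ENNReal.le_div_iff_mul_le (Or.inl hX0) (Or.inl hXtop), mul_comm]
          exact hXr r hr0 hr
      have h5 := mul_le_mul_right hT X
      rw [ENNReal.mul_div_cancel hX0 hXtop] at h5
      rw [← ENNReal.div_eq_inv_mul]
      rw [ENNReal.le_div_iff_mul_le (Or.inl (ne_of_gt hpos)) (Or.inr ENNReal.coe_ne_top)]
      exact h5
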